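/- Case C₁ of Lemma 4.1: for σ ≠ σ', if either (α(σ,σ') < 1, α_CG(Tσ,Tσ') < 1, α_f(σ,σ') < 1) or (α(σ,σ') = 1, α_CG(Tσ,Tσ') = 1, α_f(σ,σ') = 1), then K_CG(σ,σ') = B(σ,σ') K_c(σ,σ'). -/

import Mathlib

open Finset

theorem two_level_CGMC_case_C1
    {S Sb : Type*} [Fintype S] [Fintype Sb] [Nonempty S] [Nonempty Sb]
    [DecidableEq S] [DecidableEq Sb]
    (T : S → Sb) (μ : S → ℝ) (μ0b : Sb → ℝ)
    (ρb : Sb → Sb → ℝ) (μr : S → Sb → ℝ) (ρ : S → S → ℝ)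
    (hμpos : ∀ σ, 0 < μ σ) (hμsum : ∑ σ, μ σ = 1)
    (hμ0bpos : ∀ η, 0 < μ0b η)
    (hρbnn : ∀ η η', 0 ≤ ρb η η') (hρbsym : ∀ η η', ρb η η' = ρb η' η)
    (hρbsum : ∀ η, ∑ η', ρb η η' = 1)
    (hμrnn : ∀ σ η, 0 ≤ μr σ η)
    (hμr0 : ∀ σ η, T σ ≠ η → μr σ η = 0)
    (hμrsum : ∀ η, (∃ σ, T σ = η) →
      ∑ σ ∈ univ.filter (fun σ => T σ = η), μr σ η = 1)
    (hμrpos : ∀ σ, 0 < μr σ (T σ))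
    (hρnn : ∀ σ σ', 0 ≤ ρ σ σ') (hρsym : ∀ σ σ', ρ σ σ' = ρ σ' σ)
    (hρsum : ∀ σ, ∑ σ', ρ σ σ' = 1)
    (hρpos : ∀ σ σ', σ ≠ σ' → 0 < ρ σ σ')
    (α : S → S → ℝ) (hα : ∀ σ σ', α σ σ' = min 1 (μ σ' / μ σ))
    (αCG : Sb → Sb → ℝ) (hαCG : ∀ η η', αCG η η' = min 1 (μ0b η' / μ0b η))
    (αf : S → S → ℝ)
    (hαf : ∀ σ σ', αf σ σ' =
      min 1 ((μ σ' * μ0b (T σ) * μr σ (T σ)) /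
             (μ σ * μ0b (T σ') * μr σ' (T σ'))))
    (Kc : S → S → ℝ)
    (hKc : ∀ σ σ', σ ≠ σ' → Kc σ σ' = α σ σ' * ρ σ σ')
    (KCG : S → S → ℝ)
    (hKCG : ∀ σ σ', σ ≠ σ' →
      KCG σ σ' = αf σ σ' * αCG (T σ) (T σ') * μr σ' (T σ') * ρb (T σ) (T σ'))
    (B : S → S → ℝ)
    (hB1 : ∀ σ σ', σ ≠ σ' → αf σ σ' = 1 →
      B σ σ' = ρb (T σ) (T σ') / ρ σ σ' * μr σ' (T σ'))
    (hB2 : ∀ σ σ', σ ≠ σ' → αf σ σ' < 1 →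
      B σ σ' = ρb (T σ) (T σ') / ρ σ σ' * μr σ (T σ))
    :
    ∀ σ σ', σ ≠ σ' →
      ((α σ σ' < 1 ∧ αCG (T σ) (T σ') < 1 ∧ αf σ σ' < 1) ∨
       (α σ σ' = 1 ∧ αCG (T σ) (T σ') = 1 ∧ αf σ σ' = 1)) →
      KCG σ σ' = B σ σ' * Kc σ σ' := by
  intro σ σ' hne hcase
  have hρp := hρpos σ σ' hne
  have hμp := hμpos σ
  have hμp' := hμpos σ'
  have h0 := hμ0bpos (T σ)
  have h0' := hμ0bpos (T σ')
  have hr := hμrpos σ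
  have hr' := hμrpos σ'
  rcases hcase with ⟨ha, hcg, hf⟩ | ⟨ha, hcg, hf⟩
  · have hαe : α σ σ' = μ σ' / μ σ := by
      rw [hα] at ha ⊢
      rcases min_cases 1 (μ σ' / μ σ) with ⟨h1, _⟩ | ⟨h1, _⟩
      · rw [h1] at ha; exact absurd ha (lt_irrefl 1)
      · exact h1
    have hcge : αCG (T σ) (T σ') = μ0b (T σ') / μ0b (T σ) := by
      rw [hαCG] at hcg ⊢
      rcases min_cases 1 (μ0b (T σ') / μ0b (T σ)) with ⟨h1, _⟩ | ⟨h1, _⟩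
      · rw [h1] at hcg; exact absurd hcg (lt_irrefl 1)
      · exact h1
    have hfe : αf σ σ' = (μ σ' * μ0b (T σ) * μr σ (T σ)) /
        (μ σ * μ0b (T σ') * μr σ' (T σ')) := by
      rw [hαf] at hf ⊢
      rcases min_cases 1 ((μ σ' * μ0b (T σ) * μr σ (T σ)) /
        (μ σ * μ0b (T σ') * μr σ' (T σ'))) with ⟨h1, _⟩ | ⟨h1, _⟩
      · rw [h1] at hf; exact absurd hf (lt_irrefl 1)
      · exact h1
    rw [hKCG σ σ' hne, hKc σ σ' hne, hB2 σ σ' hne hf, hfe, hcge, hαe]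
    field_simp
  · rw [hKCG σ σ' hne, hKc σ σ' hne, hB1 σ σ' hne hf, hf, hcg, ha]
    field_simp
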